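/- Let d : ℕ → A be admissible. Then there exists n ≥ 1 such that |F(n)| ≤ n if and only if d is eventually periodic (equivalently, by Blanchard's theorem, if and only if the β-shift X_d is sofic). -/

import Mathlib

namespace BetaShift

variable {A : Type*}

/-- The shift map: `(shift x) n = x (n+1)`. -/
def shift (x : ℕ → A) : ℕ → A := fun n => x (n + 1)

/-- Lexicographic order on one-sided sequences: `x = y`, or there is an index `i`
such that `x j = y j` for all `j < i` and `x i < y i`. -/
def SeqLe [LinearOrder A] (x y : ℕ → A) : Prop :=
  x = y ∨ ∃ i, (∀ j, j < i → x j = y j) ∧ x i < y i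

/-- A word `w` occurs in the sequence `x`. -/
def Occurs (w : List A) (x : ℕ → A) : Prop :=
  ∃ i : ℕ, ∀ j : Fin w.length, x (i + j) = w.get j

/-- `Complexity x n` is the number `Φ_n(x)` of distinct words of length `n` occurring in `x`. -/
noncomputable def Complexity (x : ℕ → A) (n : ℕ) : ℕ :=
  Set.ncard {w : List A | w.length = n ∧ Occurs w x}

/-- A sequence is eventually periodic if there are `p ≥ 1` and `N` with
`d (i + p) = d i` for all `i ≥ N`. -/
def EventuallyPeriodic (d : ℕ → A) : Prop :=
  ∃ p, 1 ≤ p ∧ ∃ N, ∀ i, N ≤ i → d (i + p) = d i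

/-- `(d)_k`, the `k`-letter prefix of the sequence `d`, as a word. -/
def prefixWord (d : ℕ → A) (k : ℕ) : List A := List.ofFn (fun i : Fin k => d i)

variable {m : ℕ}

/-- `d` is admissible: every shift of `d` is lexicographically ≤ `d`,
and `d` is not eventually `0`. -/
def Admissible (d : ℕ → Fin m) : Prop :=
  (∀ i, SeqLe (shift^[i] d) d) ∧ ∀ N, ∃ i, N ≤ i ∧ (d i).val ≠ 0

/-- The one-sided β-shift `X_d` determined by the admissible sequence `d`. -/
def XSet (d : ℕ → Fin m) : Set (ℕ → Fin m) :=
  {x | ∀ i, SeqLe (shift^[i] x) d}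

/-- The language of `X_d`: all words occurring in some point of `X_d`. -/
def Lang (d : ℕ → Fin m) : Set (List (Fin m)) :=
  {w | ∃ x ∈ XSet d, Occurs w x}

/-- The follower set of the word `w` in `X_d`. -/
def Fol (d : ℕ → Fin m) (w : List (Fin m)) : Set (List (Fin m)) :=
  {u | w ++ u ∈ Lang d}

/-- The predecessor set of the word `w` in `X_d`. -/
def Pred (d : ℕ → Fin m) (w : List (Fin m)) : Set (List (Fin m)) :=
  {s | s ++ w ∈ Lang d}

/-- The extender set of the word `w` in `X_d`. -/
def Ext (d : ℕ → Fin m) (w : List (Fin m)) : Set (List (Fin m) × List (Fin m)) :=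
  {p | p.1 ++ w ++ p.2 ∈ Lang d}

/-- `|F(n)|`: the number of distinct follower sets of words of length `n` in `X_d`. -/
noncomputable def FolCount (d : ℕ → Fin m) (n : ℕ) : ℕ :=
  Set.ncard {S | ∃ w ∈ Lang d, w.length = n ∧ S = Fol d w}

/-- `|P(n)|`: the number of distinct predecessor sets of words of length `n` in `X_d`. -/
noncomputable def PredCount (d : ℕ → Fin m) (n : ℕ) : ℕ :=
  Set.ncard {S | ∃ w ∈ Lang d, w.length = n ∧ S = Pred d w}

/-- `|E(n)|`: the number of distinct extender sets of words of length `n` in `X_d`. -/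
noncomputable def ExtCount (d : ℕ → Fin m) (n : ℕ) : ℕ :=
  Set.ncard {S | ∃ w ∈ Lang d, w.length = n ∧ S = Ext d w}

/-- The largest `k ≤ n` such that the `k`-letter prefix of `d` is a suffix of `v`
(`k = 0`, the empty prefix, always works). -/
def classIndex (d : ℕ → Fin m) (n : ℕ) (v : List (Fin m)) : ℕ :=
  Nat.findGreatest (fun k => prefixWord d k <:+ v) n

/-- Lexicographic comparison of (equal-length) words: `u = v`, or at the first
index where they differ, `u` takes the smaller value. -/
def WordLe [LinearOrder A] (u v : List A) : Prop :=
  u = v ∨ ∃ i, ∃ (hu : i < u.length) (hv : i < v.length),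
    (∀ j (hju : j < u.length) (hjv : j < v.length), j < i → u.get ⟨j, hju⟩ = v.get ⟨j, hjv⟩) ∧
    u.get ⟨i, hu⟩ < v.get ⟨i, hv⟩

end BetaShift

open BetaShift
set_option linter.unusedSectionVars false

section Aux

variable {m : ℕ} [NeZero m]

lemma shift_it (x : ℕ → Fin m) (k : ℕ) : shift^[k] x = fun n => x (n + k) := by
  induction k with
  | zero => rfl
  | succ k ih =>
    rw [Function.iterate_succ_apply']
    funext n
    rw [ih]
    show x (n + 1 + k) = x (n + (k + 1))
    congr 1; omega

/-- `u ≤ v` lexicographically looking only at the first `l` coordinates. -/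
def LeUpTo (l : ℕ) (x y : ℕ → Fin m) : Prop :=
  (∀ j, j < l → x j = y j) ∨ ∃ i, i < l ∧ (∀ j, j < i → x j = y j) ∧ x i < y i

lemma LeUpTo.congr {l : ℕ} {x x' y y' : ℕ → Fin m} (hx : ∀ j, j < l → x j = x' j)
    (hy : ∀ j, j < l → y j = y' j) (h : LeUpTo l x y) : LeUpTo l x' y' := by
  rcases h with h | ⟨i, hi, hpre, hlt⟩
  · exact Or.inl fun j hj => (hx j hj).symm.trans ((h j hj).trans (hy j hj))
  · refine Or.inr ⟨i, hi, fun j hj => (hx j (hj.trans hi)).symm.trans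
      ((hpre j hj).trans (hy j (hj.trans hi))), ?_⟩
    rw [← hx i hi, ← hy i hi]; exact hlt

lemma seqLe_leUpTo {x y : ℕ → Fin m} (h : SeqLe x y) (l : ℕ) : LeUpTo l x y := by
  rcases h with h | ⟨i, hpre, hlt⟩
  · exact Or.inl fun j _ => congrFun h j
  · by_cases hi : i < l
    · exact Or.inr ⟨i, hi, hpre, hlt⟩
    · exact Or.inl fun j hj => hpre j (by omega)

lemma leUpTo_total (l : ℕ) (x y : ℕ → Fin m) :
    LeUpTo l x y ∨ ∃ i, i < l ∧ (∀ j, j < i → x j = y j) ∧ y i < x i := by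
  by_cases h : ∀ j, j < l → x j = y j
  · exact Or.inl (Or.inl h)
  · push_neg at h
    have hex : ∃ j, j < l ∧ x j ≠ y j := by
      obtain ⟨j, hj, hne⟩ := h; exact ⟨j, hj, hne⟩
    classical
    obtain ⟨hil, hine⟩ := Nat.find_spec hex
    have hpre : ∀ j, j < Nat.find hex → x j = y j := by
      intro j hj
      by_contra hne
      have hjl : j < l := by omega
      have : Nat.find hex ≤ j := Nat.find_le ⟨hjl, hne⟩
      omega
    rcases lt_trichotomy (x (Nat.find hex)) (y (Nat.find hex)) with hlt | heq | hgt
    · exact Or.inl (Or.inr ⟨_, hil, hpre, hlt⟩)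
    · exact absurd heq hine
    · exact Or.inr ⟨_, hil, hpre, hgt⟩

lemma leUpTo_antisymm {l : ℕ} {x y : ℕ → Fin m} (h1 : LeUpTo l x y) (h2 : LeUpTo l y x) :
    ∀ j, j < l → x j = y j := by
  rcases h1 with h1 | ⟨i1, hi1, hp1, hl1⟩
  · exact h1
  rcases h2 with h2 | ⟨i2, hi2, hp2, hl2⟩
  · exact absurd ((h2 i1 hi1).symm) (ne_of_lt hl1)
  rcases lt_trichotomy i1 i2 with h | h | h
  · exact absurd (hp2 i1 h).symm (ne_of_lt hl1)
  · subst h; exact absurd hl1 (not_lt_of_gt hl2)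
  · exact absurd (hp1 i2 h) (ne_of_gt hl2)

lemma leUpTo_trans {l : ℕ} {x y z : ℕ → Fin m} (h1 : LeUpTo l x y) (h2 : LeUpTo l y z) :
    LeUpTo l x z := by
  rcases h1 with h1 | ⟨i1, hi1, hp1, hl1⟩
  · exact h2.congr (fun j hj => (h1 j hj).symm) (fun _ _ => rfl)
  rcases h2 with h2 | ⟨i2, hi2, hp2, hl2⟩
  · refine Or.inr ⟨i1, hi1, fun j hj => (hp1 j hj).trans (h2 j (hj.trans hi1)), ?_⟩
    rw [← h2 i1 hi1]; exact hl1
  rcases lt_trichotomy i1 i2 with h | h | h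
  · refine Or.inr ⟨i1, hi1, fun j hj => (hp1 j hj).trans (hp2 j (hj.trans h)), ?_⟩
    rw [← hp2 i1 h]; exact hl1
  · subst h; exact Or.inr ⟨i1, hi1, fun j hj => (hp1 j hj).trans (hp2 j hj), hl1.trans hl2⟩
  · refine Or.inr ⟨i2, hi2, fun j hj => (hp1 j (hj.trans h)).trans (hp2 j hj), ?_⟩
    rw [hp1 i2 h]; exact hl2

lemma leUpTo_trans_seq {l : ℕ} {x y z : ℕ → Fin m} (h1 : LeUpTo l x y) (h2 : SeqLe y z) :
    LeUpTo l x z := leUpTo_trans h1 (seqLe_leUpTo h2 l)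

/-- drop a common prefix of length `c` -/
lemma leUpTo_shift {c l : ℕ} {x y : ℕ → Fin m} (hpre : ∀ j, j < c → x j = y j)
    (h : LeUpTo (c + l) x y) : LeUpTo l (fun n => x (n + c)) (fun n => y (n + c)) := by
  rcases h with h | ⟨i, hi, hp, hl⟩
  · exact Or.inl fun j hj => h (j + c) (by omega)
  · by_cases hic : i < c
    · exact absurd (hpre i hic) (ne_of_lt hl)
    · refine Or.inr ⟨i - c, by omega, fun j hj => hp (j + c) (by omega), ?_⟩
      show x (i - c + c) < y (i - c + c)
      rw [Nat.sub_add_cancel (by omega)]; exact hl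

/-- add a common prefix of length `c` -/
lemma leUpTo_unshift {c l : ℕ} {x y : ℕ → Fin m} (hpre : ∀ j, j < c → x j = y j)
    (h : LeUpTo l (fun n => x (n + c)) (fun n => y (n + c))) : LeUpTo (c + l) x y := by
  rcases h with h | ⟨i, hi, hp, hl⟩
  · refine Or.inl fun j hj => ?_
    by_cases hjc : j < c
    · exact hpre j hjc
    · have := h (j - c) (by omega); simpa [Nat.sub_add_cancel (by omega : c ≤ j)] using this
  · refine Or.inr ⟨i + c, by omega, fun j hj => ?_, hl⟩
    by_cases hjc : j < c
    · exact hpre j hjc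
    · have := hp (j - c) (by omega); simpa [Nat.sub_add_cancel (by omega : c ≤ j)] using this

end Aux
section Aux2

variable {m : ℕ} [NeZero m]

/-- a word as an infinite sequence, padded with zeros -/
def pad (w : List (Fin m)) : ℕ → Fin m := fun i => w.getD i 0

lemma pad_lt {w : List (Fin m)} {i : ℕ} (h : i < w.length) :
    pad w i = w.get ⟨i, h⟩ := by
  simp [pad, List.getD_eq_getElem?_getD, List.getElem?_eq_getElem h]

lemma pad_ge {w : List (Fin m)} {i : ℕ} (h : w.length ≤ i) : pad w i = 0 := by
  simp [pad, List.getD_eq_getElem?_getD, List.getElem?_eq_none h]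

lemma pad_append_lt {w u : List (Fin m)} {i : ℕ} (h : i < w.length) :
    pad (w ++ u) i = pad w i := by
  rw [pad_lt (by simp; omega), pad_lt h]
  simp [List.getElem_append, h]

lemma pad_append_ge {w u : List (Fin m)} {i : ℕ} (h : w.length ≤ i) :
    pad (w ++ u) i = pad u (i - w.length) := by
  by_cases h2 : i < w.length + u.length
  · rw [pad_lt (by simp; omega), pad_lt (by omega)]
    simp [List.getElem_append_right h]
  · rw [pad_ge (by simp; omega), pad_ge (by omega)]

/-- every length-`(len-k)` suffix of `w` is lexicographically at most the
corresponding prefix of `d` -/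
def Good (d : ℕ → Fin m) (w : List (Fin m)) : Prop :=
  ∀ k, k ≤ w.length → LeUpTo (w.length - k) (fun j => pad w (j + k)) d

lemma fin_pos_of_ne {a : Fin m} (h : a ≠ 0) : 0 < a :=
  lt_of_le_of_ne (Fin.zero_le a) (Ne.symm h)

lemma adm_ne {d : ℕ → Fin m} (hd : Admissible d) (N : ℕ) : ∃ i, N ≤ i ∧ d i ≠ 0 := by
  obtain ⟨i, hNi, hne⟩ := hd.2 N
  exact ⟨i, hNi, fun h => hne (by rw [h]; rfl)⟩

/-- a sequence agreeing with `d` on an initial segment and `0` afterwards is `⪯ d` -/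
lemma seqle_of_prefix_zero {d : ℕ → Fin m} (hd : Admissible d) (x : ℕ → Fin m) (l : ℕ)
    (hpre : ∀ j, j < l → x j = d j) (hzero : ∀ j, l ≤ j → x j = 0) : SeqLe x d := by
  classical
  have hex : ∃ i, l ≤ i ∧ d i ≠ 0 := adm_ne hd l
  obtain ⟨hil, hine⟩ := Nat.find_spec hex
  refine Or.inr ⟨Nat.find hex, fun j hj => ?_, ?_⟩
  · by_cases hjl : j < l
    · exact hpre j hjl
    · have hd0 : d j = 0 := by
        by_contra hne
        have : Nat.find hex ≤ j := Nat.find_le ⟨by omega, hne⟩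
        omega
      rw [hzero j (by omega), hd0]
  · rw [hzero _ hil]
    exact fin_pos_of_ne hine

lemma good_of_mem_lang {d : ℕ → Fin m} {w : List (Fin m)} (h : w ∈ Lang d) : Good d w := by
  obtain ⟨x, hx, i, hocc⟩ := h
  intro k hk
  have hle : SeqLe (shift^[i + k] x) d := hx (i + k)
  rw [shift_it] at hle
  refine (seqLe_leUpTo hle _).congr (fun j hj => ?_) (fun _ _ => rfl)
  have hjk : j + k < w.length := by omega
  have := hocc ⟨j + k, hjk⟩
  simp only [List.get_eq_getElem] at this
  rw [pad_lt hjk]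
  simp only [List.get_eq_getElem]
  rw [← this]
  congr 1
  omega

lemma pad_mem_XSet {d : ℕ → Fin m} (hd : Admissible d) {w : List (Fin m)} (hw : Good d w) :
    pad w ∈ XSet d := by
  intro i
  rw [shift_it]
  by_cases hi : i < w.length
  · have h := hw i (le_of_lt hi)
    rcases h with h | ⟨j0, hj0, hp, hl⟩
    · exact seqle_of_prefix_zero hd _ (w.length - i) h
        (fun j hj => pad_ge (by omega))
    · exact Or.inr ⟨j0, hp, hl⟩
  · exact seqle_of_prefix_zero hd _ 0 (fun j hj => by omega)
      (fun j _ => pad_ge (by omega))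

lemma lang_iff {d : ℕ → Fin m} (hd : Admissible d) {w : List (Fin m)} :
    w ∈ Lang d ↔ Good d w := by
  refine ⟨good_of_mem_lang, fun hw => ⟨pad w, pad_mem_XSet hd hw, 0, fun j => ?_⟩⟩
  rw [Nat.zero_add, pad_lt j.isLt]

end Aux2
section Aux3

variable {m : ℕ} [NeZero m]

/-- the length-`k` suffix of `w` equals the length-`k` prefix of `d` -/
def clsP (d : ℕ → Fin m) (w : List (Fin m)) (k : ℕ) : Prop :=
  ∀ j, j < k → pad w (w.length - k + j) = d j

instance clsP_dec (d : ℕ → Fin m) (w : List (Fin m)) : DecidablePred (clsP d w) := by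
  intro k; unfold clsP; infer_instance

/-- the largest `k ≤ |w|` such that the length-`k` suffix of `w` is the
length-`k` prefix of `d` -/
def cls (d : ℕ → Fin m) (w : List (Fin m)) : ℕ :=
  Nat.findGreatest (clsP d w) w.length

lemma cls_le (d : ℕ → Fin m) (w : List (Fin m)) : cls d w ≤ w.length :=
  Nat.findGreatest_le _

lemma cls_spec (d : ℕ → Fin m) (w : List (Fin m)) : clsP d w (cls d w) := by
  rcases Nat.eq_zero_or_pos (cls d w) with h | h
  · rw [h]; intro j hj; omega
  · exact Nat.findGreatest_spec (P := clsP d w) (Nat.zero_le _) (fun j hj => by omega)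

lemma le_cls {d : ℕ → Fin m} {w : List (Fin m)} {k : ℕ} (hk : k ≤ w.length)
    (h : clsP d w k) : k ≤ cls d w :=
  Nat.le_findGreatest hk h

/-- comparing two tails of `d`, given that suffix/prefix of length `l` match -/
lemma shift_seqle {d : ℕ → Fin m} (hd : Admissible d) {l c : ℕ} (hlc : l ≤ c)
    (hpre : ∀ j, j < l → d (c - l + j) = d j) :
    SeqLe (fun n => d (n + c)) (fun n => d (n + l)) := by
  have h := hd.1 (c - l)
  rw [shift_it] at h
  rcases h with h | ⟨i, hp, hl⟩
  · left; funext n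
    have := congrFun h (n + l)
    rw [show n + l + (c - l) = n + c by omega] at this
    exact this
  · have hil : l ≤ i := by
      by_contra hlt
      push_neg at hlt
      have := hpre i hlt
      rw [show c - l + i = i + (c - l) by omega] at this
      exact absurd this (ne_of_lt hl)
    refine Or.inr ⟨i - l, fun j hj => ?_, ?_⟩
    · have := hp (j + l) (by omega)
      simp only at this
      rw [show j + l + (c - l) = j + c by omega] at this
      exact this
    · show d (i - l + c) < d (i - l + l)
      rw [show i - l + c = i + (c - l) by omega, show i - l + l = i by omega]
      exact hl

/-- the candidate follower set of class `c` -/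
def FolSeq (d : ℕ → Fin m) (c : ℕ) : Set (List (Fin m)) :=
  {u | Good d u ∧ LeUpTo u.length (pad u) (fun n => d (n + c))}

lemma folSeq_congr {d : ℕ → Fin m} {c c' : ℕ} (h : ∀ j, d (j + c) = d (j + c')) :
    FolSeq d c = FolSeq d c' := by
  ext u
  simp only [FolSeq, Set.mem_setOf_eq]
  constructor
  · rintro ⟨h1, h2⟩
    exact ⟨h1, h2.congr (fun _ _ => rfl) (fun j _ => h j)⟩
  · rintro ⟨h1, h2⟩
    exact ⟨h1, h2.congr (fun _ _ => rfl) (fun j _ => (h j).symm)⟩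

/-- Key: the follower set of a word is determined by its class. -/
lemma fol_eq {d : ℕ → Fin m} (hd : Admissible d) {w : List (Fin m)} (hw : Good d w) :
    Fol d w = FolSeq d (cls d w) := by
  set n := w.length with hn
  set c := cls d w with hcdef
  have hcn : c ≤ n := cls_le d w
  have hcs : clsP d w c := cls_spec d w
  ext u
  simp only [Fol, Set.mem_setOf_eq, lang_iff hd, FolSeq]
  have hlen : (w ++ u).length = n + u.length := by simp [hn]
  constructor
  · intro h
    constructor
    · -- Good d u
      intro k hk
      have h2 := h (n + k) (by omega)
      rw [hlen] at h2
      rw [show n + u.length - (n + k) = u.length - k by omega] at h2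
      refine h2.congr (fun j hj => ?_) (fun _ _ => rfl)
      rw [show j + (n + k) = n + (j + k) by omega, pad_append_ge (by omega)]
      congr 1; omega
    · -- the lex constraint at class c
      have h2 := h (n - c) (by omega)
      rw [hlen, show n + u.length - (n - c) = c + u.length by omega] at h2
      have hpre : ∀ j, j < c → pad (w ++ u) (j + (n - c)) = d j := by
        intro j hj
        rw [pad_append_lt (by omega), show j + (n - c) = n - c + j by omega]
        exact hcs j hj
      have h3 := leUpTo_shift hpre h2
      refine h3.congr (fun j hj => ?_) (fun _ _ => rfl)
      rw [show j + c + (n - c) = n + j by omega, pad_append_ge (by omega)]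
      congr 1; omega
  · rintro ⟨hu, hle⟩
    intro k hk
    rw [hlen] at hk ⊢
    by_cases hkn : n ≤ k
    · -- suffix entirely inside u
      have h2 := hu (k - n) (by omega)
      rw [show u.length - (k - n) = n + u.length - k by omega] at h2
      refine h2.congr (fun j hj => ?_) (fun _ _ => rfl)
      rw [show j + (k - n) = (j + k) - n by omega, ← pad_append_ge (w := w) (by omega)]
    · push_neg at hkn
      set l := n - k with hldef
      have hwk := hw k (by omega)
      rw [← hldef] at hwk
      rcases hwk with hall | ⟨i, hi, hp, hl⟩
      · -- the suffix of w of length l equals the prefix of d : use class argument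
        have hclsl : clsP d w l := by
          intro j hj
          rw [show w.length - l + j = j + k by omega]
          exact hall j hj
        have hlc : l ≤ c := le_cls (by omega) hclsl
        have hdpre : ∀ j, j < l → d (c - l + j) = d j := by
          intro j hj
          have h1 := hcs (c - l + j) (by omega)
          rw [show w.length - c + (c - l + j) = j + k by omega] at h1
          rw [← h1]
          exact hall j hj
        have hseq := shift_seqle hd hlc hdpre
        have hle2 : LeUpTo u.length (pad u) (fun n' => d (n' + l)) :=
          leUpTo_trans_seq hle hseq
        have hpre2 : ∀ j, j < l → (fun j' => pad (w ++ u) (j' + k)) j = d j := by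
          intro j hj
          simp only
          rw [pad_append_lt (by omega), show j + k = w.length - l + j by omega]
          exact hclsl j hj
        have h4 : LeUpTo u.length
            (fun j => pad (w ++ u) (j + l + k)) (fun j => d (j + l)) := by
          refine hle2.congr (fun j hj => ?_) (fun _ _ => rfl)
          rw [show j + l + k = n + j by omega, pad_append_ge (by omega)]
          congr 1; omega
        have h5 := leUpTo_unshift hpre2 (by
          refine h4.congr (fun j hj => ?_) (fun _ _ => rfl) <;> simp)
        rw [show n + u.length - k = l + u.length by omega]
        exact h5
      · -- strict inequality already inside w
        refine Or.inr ⟨i, by omega, fun j hj => ?_, ?_⟩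
        · show pad (w ++ u) (j + k) = d j
          rw [pad_append_lt (by omega)]
          exact hp j hj
        · show pad (w ++ u) (i + k) < d i
          rw [pad_append_lt (by omega)]
          exact hl

end Aux3
section Aux4

variable {m : ℕ} [NeZero m]

/-- the length-`l` prefix of `σ^c d` as a word -/
def pw (d : ℕ → Fin m) (c l : ℕ) : List (Fin m) := List.ofFn (fun i : Fin l => d (i + c))

lemma pw_length (d : ℕ → Fin m) (c l : ℕ) : (pw d c l).length = l := by simp [pw]

lemma pad_pw {d : ℕ → Fin m} {c l i : ℕ} (h : i < l) : pad (pw d c l) i = d (i + c) := by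
  rw [pad_lt (by simpa [pw_length] using h)]
  simp [pw]

lemma pw_mem_folSeq {d : ℕ → Fin m} (hd : Admissible d) (c l : ℕ) :
    pw d c l ∈ FolSeq d c := by
  constructor
  · intro k hk
    rw [pw_length] at hk ⊢
    have h := hd.1 (k + c)
    rw [shift_it] at h
    refine (seqLe_leUpTo h _).congr (fun j hj => ?_) (fun _ _ => rfl)
    rw [pad_pw (by omega)]
    congr 1; omega
  · rw [pw_length]
    exact Or.inl fun j hj => pad_pw hj

lemma folSeq_tails_eq {d : ℕ → Fin m} (hd : Admissible d) {c c' : ℕ}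
    (h : FolSeq d c = FolSeq d c') : ∀ j, d (j + c) = d (j + c') := by
  intro j
  have h1 : pw d c (j + 1) ∈ FolSeq d c' := h ▸ pw_mem_folSeq hd c (j + 1)
  have h2 : pw d c' (j + 1) ∈ FolSeq d c := h.symm ▸ pw_mem_folSeq hd c' (j + 1)
  have l1 : LeUpTo (j + 1) (fun n => d (n + c)) (fun n => d (n + c')) := by
    have := h1.2
    rw [pw_length] at this
    exact this.congr (fun i hi => pad_pw hi) (fun _ _ => rfl)
  have l2 : LeUpTo (j + 1) (fun n => d (n + c')) (fun n => d (n + c)) := by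
    have := h2.2
    rw [pw_length] at this
    exact this.congr (fun i hi => pad_pw hi) (fun _ _ => rfl)
  exact leUpTo_antisymm l1 l2 j (by omega)

lemma d_zero_ne {d : ℕ → Fin m} (hd : Admissible d) : d 0 ≠ 0 := by
  intro h0
  have hall : ∀ i, d i = 0 := by
    intro i
    have h := hd.1 i
    rw [shift_it] at h
    rcases h with h | ⟨j, hp, hl⟩
    · have := congrFun h 0
      simpa [h0] using this
    · rcases Nat.eq_zero_or_pos j with rfl | hj
      · have : d (0 + i) < (0 : Fin m) := h0 ▸ hl
        exact absurd this (not_lt_of_ge (Fin.zero_le _))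
      · have := hp 0 hj
        simpa [h0] using this
  obtain ⟨i, _, hne⟩ := adm_ne hd 0
  exact hne (hall i)

/-- a word of length `n` whose class is exactly `c` -/
def realWord (d : ℕ → Fin m) (n c : ℕ) : List (Fin m) :=
  List.replicate (n - c) 0 ++ List.ofFn (fun i : Fin c => d i)

lemma realWord_length {d : ℕ → Fin m} {n c : ℕ} (h : c ≤ n) :
    (realWord d n c).length = n := by simp [realWord]; omega

lemma pad_realWord_lt {d : ℕ → Fin m} {n c i : ℕ} (h : i < n - c) :
    pad (realWord d n c) i = 0 := by
  rw [realWord, pad_append_lt (by simpa using h), pad_lt (by simpa using h)]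
  simp

lemma pad_realWord_ge {d : ℕ → Fin m} {n c i : ℕ} (h1 : n - c ≤ i) (h2 : i < n) (hcn : c ≤ n) :
    pad (realWord d n c) i = d (i - (n - c)) := by
  rw [realWord, pad_append_ge (by simpa using h1), pad_lt (by simp; omega)]
  simp

lemma good_realWord {d : ℕ → Fin m} (hd : Admissible d) {n c : ℕ} (hcn : c ≤ n) :
    Good d (realWord d n c) := by
  intro k hk
  rw [realWord_length hcn] at hk ⊢
  by_cases hkr : k < n - c
  · -- the suffix starts with a 0 while d starts with a nonzero letter
    refine Or.inr ⟨0, by omega, fun j hj => by omega, ?_⟩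
    show pad (realWord d n c) (0 + k) < d 0
    rw [Nat.zero_add, pad_realWord_lt hkr]
    exact fin_pos_of_ne (d_zero_ne hd)
  · -- the suffix is a suffix of the prefix of d
    push_neg at hkr
    have h := hd.1 (k - (n - c))
    rw [shift_it] at h
    refine (seqLe_leUpTo h _).congr (fun j hj => ?_) (fun _ _ => rfl)
    rw [pad_realWord_ge (by omega) (by omega) hcn]
    congr 1; omega

lemma cls_realWord {d : ℕ → Fin m} (hd : Admissible d) {n c : ℕ} (hcn : c ≤ n) :
    cls d (realWord d n c) = c := by
  rw [cls, Nat.findGreatest_eq_iff]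
  refine ⟨by rw [realWord_length hcn]; omega, fun _ => fun j hj => ?_, fun k hck hkle => ?_⟩
  · rw [realWord_length hcn, pad_realWord_ge (by omega) (by omega) hcn]
    congr 1; omega
  · rw [realWord_length hcn] at hkle
    intro hP
    have := hP 0 (by omega)
    rw [realWord_length hcn, Nat.add_zero, pad_realWord_lt (by omega)] at this
    exact d_zero_ne hd this.symm

lemma fset_eq {d : ℕ → Fin m} (hd : Admissible d) (n : ℕ) :
    {S | ∃ w ∈ Lang d, w.length = n ∧ S = Fol d w} = FolSeq d '' Set.Iic n := by
  ext S
  constructor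
  · rintro ⟨w, hw, hlen, rfl⟩
    exact ⟨cls d w, by simpa [Set.mem_Iic, ← hlen] using cls_le d w,
      (fol_eq hd (good_of_mem_lang hw)).symm⟩
  · rintro ⟨c, hc, rfl⟩
    have hcn : c ≤ n := hc
    refine ⟨realWord d n c, (lang_iff hd).2 (good_realWord hd hcn), realWord_length hcn, ?_⟩
    rw [fol_eq hd (good_realWord hd hcn), cls_realWord hd hcn]

end Aux4
/-- `∃ n ≥ 1, |F(n)| ≤ n` iff `d` is eventually periodic. -/
theorem stmt3 (m : ℕ) (hm : 1 ≤ m) (d : ℕ → Fin m) (hd : Admissible d) :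
    (∃ n, 1 ≤ n ∧ FolCount d n ≤ n) ↔ EventuallyPeriodic d := by
  haveI : NeZero m := ⟨by omega⟩
  constructor
  · rintro ⟨n, hn1, hF⟩
    have hF' : (FolSeq d '' Set.Iic n).ncard ≤ n := by
      have : FolCount d n = (FolSeq d '' Set.Iic n).ncard := by
        rw [FolCount, fset_eq hd]
      omega
    have hnin : ¬ Set.InjOn (FolSeq d) (Set.Iic n) := by
      intro hinj
      have h1 : (FolSeq d '' Set.Iic n).ncard = (Set.Iic n : Set ℕ).ncard :=
        Set.ncard_image_of_injOn hinj
      have h2 : (Set.Iic n : Set ℕ).ncard = n + 1 := by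
        rw [← Finset.coe_Iic, Set.ncard_coe_finset, Nat.card_Iic]
      omega
    rw [Set.InjOn] at hnin
    push_neg at hnin
    obtain ⟨a, ha, b, hb, heq, hne⟩ := hnin
    have key : ∀ a b : ℕ, a < b → FolSeq d a = FolSeq d b → EventuallyPeriodic d := by
      intro a b hab h
      have htail := folSeq_tails_eq hd h
      refine ⟨b - a, by omega, a, fun i hi => ?_⟩
      have h1 := htail (i - a)
      rw [show i - a + a = i by omega, show i - a + b = i + (b - a) by omega] at h1
      exact h1.symm
    rcases lt_or_gt_of_ne hne with h | h
    · exact key a b h heq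
    · exact key b a h heq.symm
  · rintro ⟨p, hp, N, hper⟩
    refine ⟨N + p, by omega, ?_⟩
    have htail : ∀ j, d (j + (N + p)) = d (j + N) := by
      intro j
      have := hper (j + N) (by omega)
      rw [show j + N + p = j + (N + p) by omega] at this
      exact this
    have hNn : FolSeq d (N + p) = FolSeq d N := folSeq_congr htail
    have hsub : FolSeq d '' Set.Iic (N + p) ⊆ FolSeq d '' Set.Iio (N + p) := by
      rintro S ⟨c, hc, rfl⟩
      have hc' : c ≤ N + p := hc
      rcases lt_or_eq_of_le hc' with hlt | hceq
      · exact ⟨c, hlt, rfl⟩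
      · exact ⟨N, by simp [Set.mem_Iio]; omega, by rw [← hNn, hceq]⟩
    calc FolCount d (N + p) = (FolSeq d '' Set.Iic (N + p)).ncard := by
            rw [FolCount, fset_eq hd]
      _ ≤ (FolSeq d '' Set.Iio (N + p)).ncard :=
            Set.ncard_le_ncard hsub ((Set.finite_Iio _).image _)
      _ ≤ (Set.Iio (N + p)).ncard := Set.ncard_image_le (Set.finite_Iio _)
      _ = N + p := by rw [← Finset.coe_Iio, Set.ncard_coe_finset, Nat.card_Iio]
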